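/- arXiv:1608.06944 — 2 statements merged into one kernel-verified Lean document; each statement's English description precedes it below -/
import Mathlib

section
/- A signed cubic graph admits a nowhere-zero 3-flow if and only if it is antibalanced and its underlying graph has a perfect matching. -/
open Finset

/-- A signed multigraph on vertex type `V` with edge type `E`:
each edge has an ordered pair of endpoints and a sign (`neg e = true` means negative). -/
structure SignedMultigraph (V E : Type) where
  ends : E → V × V
  neg : E → Bool

namespace SignedMultigraph

variable {V E : Type} [Fintype V] [Fintype E] [DecidableEq V] [DecidableEq E]

/-- Degree of `v` in the edge subset `F` (loops count twice). -/
def degIn (G : SignedMultigraph V E) (F : Finset E) (v : V) : ℕ :=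
  ∑ e ∈ F, ((if (G.ends e).1 = v then 1 else 0) + (if (G.ends e).2 = v then 1 else 0))

/-- Adjacency via an edge of `F`. -/
def adj (G : SignedMultigraph V E) (F : Finset E) (v w : V) : Prop :=
  ∃ e ∈ F, G.ends e = (v, w) ∨ G.ends e = (w, v)

/-- Vertices incident with an edge of `F`. -/
def supp (G : SignedMultigraph V E) (F : Finset E) : Set V :=
  {v | ∃ e ∈ F, (G.ends e).1 = v ∨ (G.ends e).2 = v}

/-- Reachability using edges of `F`. -/
def reach (G : SignedMultigraph V E) (F : Finset E) : V → V → Prop :=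
  Relation.ReflTransGen (G.adj F)

/-- `F` is (the edge set of) a circuit: nonempty, every vertex has degree 0 or 2,
and the support is connected. -/
def IsCircuit (G : SignedMultigraph V E) (F : Finset E) : Prop :=
  F.Nonempty ∧ (∀ v, G.degIn F v = 0 ∨ G.degIn F v = 2) ∧
    ∀ v ∈ G.supp F, ∀ w ∈ G.supp F, G.reach F v w

/-- The negative edges inside `F`. -/
def negEdges (G : SignedMultigraph V E) (F : Finset E) : Finset E :=
  F.filter (fun e => G.neg e = true)

def IsBalancedCircuit (G : SignedMultigraph V E) (F : Finset E) : Prop :=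
  G.IsCircuit F ∧ Even (G.negEdges F).card

def IsUnbalancedCircuit (G : SignedMultigraph V E) (F : Finset E) : Prop :=
  G.IsCircuit F ∧ Odd (G.negEdges F).card

/-- A signed graph is balanced if every circuit has an even number of negative edges. -/
def Balanced (G : SignedMultigraph V E) : Prop :=
  ∀ F : Finset E, G.IsCircuit F → Even (G.negEdges F).card

/-- `P` is the edge set of a path from `v₁` to `v₂` (trivial iff `v₁ = v₂`). -/
def IsPathBetween (G : SignedMultigraph V E) (P : Finset E) (v₁ v₂ : V) : Prop :=
  if v₁ = v₂ then P = ∅ else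
    G.degIn P v₁ = 1 ∧ G.degIn P v₂ = 1 ∧
    (∀ v, v ≠ v₁ → v ≠ v₂ → G.degIn P v = 0 ∨ G.degIn P v = 2) ∧
    ∀ v ∈ G.supp P, ∀ w ∈ G.supp P, G.reach P v w

/-- `F` is a barbell: two unbalanced circuits joined by a (possibly trivial) path. -/
def IsBarbell (G : SignedMultigraph V E) (F : Finset E) : Prop :=
  ∃ (C₁ C₂ P : Finset E) (v₁ v₂ : V),
    G.IsUnbalancedCircuit C₁ ∧ G.IsUnbalancedCircuit C₂ ∧
    G.IsPathBetween P v₁ v₂ ∧ v₁ ∈ G.supp C₁ ∧ v₂ ∈ G.supp C₂ ∧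
    F = C₁ ∪ C₂ ∪ P ∧
    (G.supp C₁ \ {v₁}) ∩ G.supp (C₂ ∪ P) = ∅ ∧
    (G.supp C₂ \ {v₂}) ∩ G.supp (C₁ ∪ P) = ∅

/-- A signed circuit is a balanced circuit or a barbell. -/
def IsSignedCircuit (G : SignedMultigraph V E) (F : Finset E) : Prop :=
  G.IsBalancedCircuit F ∨ G.IsBarbell F

/-- A bidirection `d` assigns to each half-edge a direction (`true` = toward its endpoint);
it is an orientation of the signed graph if negative edges are exactly the
extroverted/introverted ones. -/
def IsOrientation (G : SignedMultigraph V E) (d : E → Bool × Bool) : Prop :=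
  ∀ e, G.neg e = true ↔ (d e).1 = (d e).2

/-- Net inflow at vertex `v` (incoming half-edges count `+φ e`, outgoing `-φ e`). -/
def vertexSum {Γ : Type} [AddCommGroup Γ] (G : SignedMultigraph V E)
    (d : E → Bool × Bool) (φ : E → Γ) (v : V) : Γ :=
  ∑ e, ((if (G.ends e).1 = v then (if (d e).1 then φ e else -φ e) else 0) +
        (if (G.ends e).2 = v then (if (d e).2 then φ e else -φ e) else 0))

/-- `(d, φ)` is a flow: `d` is an orientation and Kirchhoff's law holds at every vertex. -/
def IsFlow {Γ : Type} [AddCommGroup Γ] (G : SignedMultigraph V E)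
    (d : E → Bool × Bool) (φ : E → Γ) : Prop :=
  G.IsOrientation d ∧ ∀ v, G.vertexSum d φ v = 0

/-- Nowhere-zero `Γ`-flow. -/
def HasNZGroupFlow (G : SignedMultigraph V E) (Γ : Type) [AddCommGroup Γ] : Prop :=
  ∃ (d : E → Bool × Bool) (φ : E → Γ), G.IsFlow d φ ∧ ∀ e, φ e ≠ 0

/-- Flow-admissible: has a nowhere-zero integer flow. -/
def FlowAdmissible (G : SignedMultigraph V E) : Prop :=
  ∃ (d : E → Bool × Bool) (φ : E → ℤ), G.IsFlow d φ ∧ ∀ e, φ e ≠ 0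

/-- Nowhere-zero `k`-flow: integer flow with `0 < |φ e| < k`. -/
def HasNZkFlow (G : SignedMultigraph V E) (k : ℤ) : Prop :=
  ∃ (d : E → Bool × Bool) (φ : E → ℤ), G.IsFlow d φ ∧ ∀ e, 0 < |φ e| ∧ |φ e| < k

/-- The flow number: least `k : ℕ` admitting a nowhere-zero `k`-flow. -/
noncomputable def flowNum (G : SignedMultigraph V E) : ℕ :=
  sInf {k : ℕ | G.HasNZkFlow (k : ℤ)}

/-- Circular `t`-flow: real flow with `1 ≤ |φ e| ≤ t - 1`. -/
def HasCircularFlow (G : SignedMultigraph V E) (t : ℝ) : Prop :=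
  ∃ (d : E → Bool × Bool) (φ : E → ℝ), G.IsFlow d φ ∧ ∀ e, 1 ≤ |φ e| ∧ |φ e| ≤ t - 1

/-- The circular flow number. -/
noncomputable def circFlowNum (G : SignedMultigraph V E) : ℝ :=
  sInf {t : ℝ | G.HasCircularFlow t}

/-- Bridgeless: the endpoints of each edge are joined by a path avoiding that edge. -/
def Bridgeless (G : SignedMultigraph V E) : Prop :=
  ∀ e : E, G.reach (Finset.univ.erase e) (G.ends e).1 (G.ends e).2

/-- Switching at a vertex `v`. -/
def switch (G : SignedMultigraph V E) (v : V) : SignedMultigraph V E where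
  ends := G.ends
  neg := fun e => xor (G.neg e) (xor (decide ((G.ends e).1 = v)) (decide ((G.ends e).2 = v)))

/-- Switching equivalence of signed graphs on the same underlying graph. -/
def Equivalent (G₁ G₂ : SignedMultigraph V E) : Prop :=
  Relation.ReflTransGen (fun H₁ H₂ => ∃ v : V, H₂ = H₁.switch v) G₁ G₂

/-- Antibalanced: switching-equivalent to an all-negative signed graph. -/
def Antibalanced (G : SignedMultigraph V E) : Prop :=
  ∃ G' : SignedMultigraph V E, G.Equivalent G' ∧ ∀ e, G'.neg e = true

/-- No vertex of the support of `S` is a source or a sink of `d` restricted to `S`. -/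
def NoSourceSink (G : SignedMultigraph V E) (d : E → Bool × Bool) (S : Finset E) : Prop :=
  ∀ v ∈ G.supp S,
    (∃ e ∈ S, ((G.ends e).1 = v ∧ (d e).1 = true) ∨ ((G.ends e).2 = v ∧ (d e).2 = true)) ∧
    (∃ e ∈ S, ((G.ends e).1 = v ∧ (d e).1 = false) ∨ ((G.ends e).2 = v ∧ (d e).2 = false))

/-- Zero-sum `k`-flow on the underlying (unsigned) graph. -/
def ZeroSumFlow (G : SignedMultigraph V E) (k : ℤ) : Prop :=
  ∃ f : E → ℤ, (∀ e, 1 ≤ |f e| ∧ |f e| ≤ k - 1) ∧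
    ∀ v : V, (∑ e, ((if (G.ends e).1 = v then f e else 0) +
                    (if (G.ends e).2 = v then f e else 0))) = 0

end SignedMultigraph

namespace SignedMultigraph
section Aux
set_option linter.unusedSectionVars false
variable {V E : Type} [Fintype V] [Fintype E] [DecidableEq V] [DecidableEq E]

theorem switch_ends (G : SignedMultigraph V E) (v : V) : (G.switch v).ends = G.ends := rfl

theorem switch_switch (G : SignedMultigraph V E) (v : V) : (G.switch v).switch v = G := by
  obtain ⟨ends, neg⟩ := G
  simp only [switch]
  congr 1
  funext e
  by_cases h1 : (ends e).1 = v <;> by_cases h2 : (ends e).2 = v <;> simp [h1, h2]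

theorem equiv_ends {G G' : SignedMultigraph V E} (h : G.Equivalent G') : G'.ends = G.ends := by
  induction h with
  | refl => rfl
  | tail _ h ih => obtain ⟨v, rfl⟩ := h; rw [switch_ends]; exact ih

theorem equiv_degIn {G G' : SignedMultigraph V E} (h : G.Equivalent G') (F : Finset E) (v : V) :
    G'.degIn F v = G.degIn F v := by
  unfold degIn; rw [equiv_ends h]

theorem if_not_flip (x : ℤ) (b : Bool) : (if (!b) = true then x else -x) = -(if b = true then x else -x) := by
  cases b <;> simp

theorem hasNZk_of_switch (G : SignedMultigraph V E) (v : V) (k : ℤ)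
    (h : G.HasNZkFlow k) : (G.switch v).HasNZkFlow k := by
  obtain ⟨d, φ, ⟨hor, hks⟩, hnz⟩ := h
  set d' : E → Bool × Bool := fun e => (xor (decide ((G.ends e).1 = v)) (d e).1,
                    xor (decide ((G.ends e).2 = v)) (d e).2) with hd'
  refine ⟨d', φ, ⟨?_, ?_⟩, hnz⟩
  · intro e
    have := hor e
    show (G.switch v).neg e = true ↔ _
    simp only [switch, hd']
    rcases hde : d e with ⟨b1, b2⟩
    rw [hde] at this
    cases h1 : decide ((G.ends e).1 = v) <;> cases h2 : decide ((G.ends e).2 = v) <;>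
      cases b1 <;> cases b2 <;> simp_all
  · intro w
    have hw := hks w
    show (G.switch v).vertexSum d' φ w = 0
    unfold vertexSum at hw ⊢
    rw [show (G.switch v).ends = G.ends from rfl]
    by_cases hvw : v = w
    · subst hvw
      have key : ∀ e : E,
          ((if (G.ends e).1 = v then (if (d' e).1 then φ e else -φ e) else 0) +
            (if (G.ends e).2 = v then (if (d' e).2 then φ e else -φ e) else 0)) =
          -(((if (G.ends e).1 = v then (if (d e).1 then φ e else -φ e) else 0) +
            (if (G.ends e).2 = v then (if (d e).2 then φ e else -φ e) else 0))) := by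
        intro e
        simp only [hd']
        by_cases h1 : (G.ends e).1 = v <;> by_cases h2 : (G.ends e).2 = v
        · rw [if_pos h1, if_pos h2, if_pos h1, if_pos h2]
          simp only [decide_eq_true h1, decide_eq_true h2, Bool.true_xor, if_not_flip]
          ring
        · rw [if_pos h1, if_neg h2, if_pos h1, if_neg h2]
          simp only [decide_eq_true h1, Bool.true_xor, if_not_flip]
          ring
        · rw [if_neg h1, if_pos h2, if_neg h1, if_pos h2]
          simp only [decide_eq_true h2, Bool.true_xor, if_not_flip]
          ring
        · rw [if_neg h1, if_neg h2, if_neg h1, if_neg h2]; ring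
      rw [Finset.sum_congr rfl (fun e _ => key e), Finset.sum_neg_distrib, hw, neg_zero]
    · have key : ∀ e : E,
          ((if (G.ends e).1 = w then (if (d' e).1 then φ e else -φ e) else 0) +
            (if (G.ends e).2 = w then (if (d' e).2 then φ e else -φ e) else 0)) =
          (((if (G.ends e).1 = w then (if (d e).1 then φ e else -φ e) else 0) +
            (if (G.ends e).2 = w then (if (d e).2 then φ e else -φ e) else 0))) := by
        intro e
        simp only [hd']
        have e1 : ((G.ends e).1 = w) → ¬ ((G.ends e).1 = v) := fun h hh => hvw (hh ▸ h ▸ rfl)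
        have e2 : ((G.ends e).2 = w) → ¬ ((G.ends e).2 = v) := fun h hh => hvw (hh ▸ h ▸ rfl)
        by_cases h1 : (G.ends e).1 = w <;> by_cases h2 : (G.ends e).2 = w
        · rw [if_pos h1, if_pos h2, if_pos h1, if_pos h2]
          simp only [decide_eq_false (e1 h1), decide_eq_false (e2 h2), Bool.false_xor]
        · rw [if_pos h1, if_neg h2, if_pos h1, if_neg h2]
          simp only [decide_eq_false (e1 h1), Bool.false_xor]
        · rw [if_neg h1, if_pos h2, if_neg h1, if_pos h2]
          simp only [decide_eq_false (e2 h2), Bool.false_xor]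
        · rw [if_neg h1, if_neg h2, if_neg h1, if_neg h2]
      rw [Finset.sum_congr rfl (fun e _ => key e), hw]

theorem equiv_symm {G G' : SignedMultigraph V E} (h : G.Equivalent G') : G'.Equivalent G := by
  have hs : Symmetric (fun H₁ H₂ : SignedMultigraph V E => ∃ v : V, H₂ = H₁.switch v) := by
    rintro a b ⟨v, rfl⟩
    exact ⟨v, (switch_switch a v).symm⟩
  haveI : Std.Symm (fun H₁ H₂ : SignedMultigraph V E => ∃ v : V, H₂ = H₁.switch v) :=
    ⟨fun a b => @hs a b⟩
  exact @Std.Symm.symm _ (Relation.ReflTransGen (fun H₁ H₂ : SignedMultigraph V E => ∃ v : V, H₂ = H₁.switch v))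
    Relation.ReflTransGen.symmetric _ _ h

theorem equiv_hasNZk {G G' : SignedMultigraph V E} (h : G.Equivalent G') (k : ℤ) :
    G.HasNZkFlow k ↔ G'.HasNZkFlow k := by
  constructor
  · intro hf
    induction h with
    | refl => exact hf
    | tail _ h ih => obtain ⟨v, rfl⟩ := h; exact hasNZk_of_switch _ v k ih
  · intro hf
    have h2 := equiv_symm h
    clear h
    induction h2 with
    | refl => exact hf
    | tail _ hstep ih =>
      obtain ⟨v, rfl⟩ := hstep
      exact hasNZk_of_switch _ v k ih

def switchSet (G : SignedMultigraph V E) (U : Finset V) : SignedMultigraph V E where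
  ends := G.ends
  neg := fun e => xor (G.neg e) (xor (decide ((G.ends e).1 ∈ U)) (decide ((G.ends e).2 ∈ U)))

theorem switchSet_empty (G : SignedMultigraph V E) : G.switchSet ∅ = G := by
  obtain ⟨ends, neg⟩ := G
  simp only [switchSet]
  congr 1
  funext e
  simp

theorem switchSet_insert (G : SignedMultigraph V E) (U : Finset V) (v : V) (hv : v ∉ U) :
    G.switchSet (insert v U) = (G.switchSet U).switch v := by
  obtain ⟨ends, neg⟩ := G
  simp only [switchSet, switch]
  congr 1
  funext e
  have mem : ∀ a : V, decide (a ∈ insert v U) = xor (decide (a = v)) (decide (a ∈ U)) := by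
    intro a
    by_cases h1 : a = v
    · subst h1
      simp [hv]
    · by_cases h2 : a ∈ U <;> simp [h1, h2]
  rw [mem, mem]
  cases neg e <;> by_cases h1 : (ends e).1 = v <;> by_cases h2 : (ends e).2 = v <;>
    by_cases h3 : (ends e).1 ∈ U <;> by_cases h4 : (ends e).2 ∈ U <;> simp [h1, h2, h3, h4, hv]

theorem equiv_switchSet (G : SignedMultigraph V E) (U : Finset V) :
    G.Equivalent (G.switchSet U) := by
  classical
  induction U using Finset.induction with
  | empty => rw [switchSet_empty]; exact Relation.ReflTransGen.refl
  | @insert v U hv ih =>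
    rw [switchSet_insert G U v hv]
    exact Relation.ReflTransGen.tail ih ⟨v, rfl⟩

theorem degIn_cast (G : SignedMultigraph V E) (F : Finset E) (v : V) :
    (G.degIn F v : ℤ) = ∑ e ∈ F, ((if (G.ends e).1 = v then (1:ℤ) else 0) +
      (if (G.ends e).2 = v then 1 else 0)) := by
  unfold degIn
  rw [Nat.cast_sum]
  apply Finset.sum_congr rfl
  intro e _
  split_ifs <;> simp

theorem degIn_add_compl (G : SignedMultigraph V E) (F : Finset E) (v : V) :
    G.degIn F v + G.degIn Fᶜ v = G.degIn Finset.univ v :=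
  Finset.sum_add_sum_compl F _

theorem backward_dir (G : SignedMultigraph V E) (hcubic : ∀ v : V, G.degIn Finset.univ v = 3)
    (hab : G.Antibalanced) (M : Finset E) (hM : ∀ v, G.degIn M v = 1) :
    G.HasNZkFlow 3 := by
  obtain ⟨G', hequiv, hneg⟩ := hab
  rw [equiv_hasNZk hequiv]
  refine ⟨fun e => if e ∈ M then (false, false) else (true, true),
          fun e => if e ∈ M then 2 else 1, ⟨?_, ?_⟩, ?_⟩
  · intro e
    simp only [hneg e, true_iff]
    split_ifs <;> rfl
  · intro v
    unfold vertexSum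
    have key : ∀ e : E,
        ((if (G'.ends e).1 = v then (if ((if e ∈ M then ((false : Bool), (false : Bool)) else (true, true))).1 then (if e ∈ M then (2:ℤ) else 1) else -(if e ∈ M then (2:ℤ) else 1)) else 0) +
         (if (G'.ends e).2 = v then (if ((if e ∈ M then ((false : Bool), (false : Bool)) else (true, true))).2 then (if e ∈ M then (2:ℤ) else 1) else -(if e ∈ M then (2:ℤ) else 1)) else 0)) =
        (if e ∈ M then (-2 : ℤ) else 1) * ((if (G'.ends e).1 = v then (1:ℤ) else 0) +
          (if (G'.ends e).2 = v then 1 else 0)) := by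
      intro e
      by_cases hm : e ∈ M <;>
        by_cases h1 : (G'.ends e).1 = v <;> by_cases h2 : (G'.ends e).2 = v <;>
          simp [hm, h1, h2] <;> ring
    rw [Finset.sum_congr rfl (fun e _ => key e)]
    rw [← Finset.sum_add_sum_compl M]
    have hMdeg : (G'.degIn M v : ℤ) = 1 := by rw [equiv_degIn hequiv, hM]; norm_num
    have hMcdeg : (G'.degIn Mᶜ v : ℤ) = 2 := by
      have := degIn_add_compl G' M v
      rw [equiv_degIn hequiv, equiv_degIn hequiv, equiv_degIn hequiv] at this
      rw [equiv_degIn hequiv]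
      have h3 := hcubic v
      have h1 := hM v
      omega
    have e1 : ∑ e ∈ M, (if e ∈ M then (-2 : ℤ) else 1) * ((if (G'.ends e).1 = v then (1:ℤ) else 0) +
          (if (G'.ends e).2 = v then 1 else 0)) = -2 * (G'.degIn M v : ℤ) := by
      rw [degIn_cast, Finset.mul_sum]
      apply Finset.sum_congr rfl
      intro e he
      rw [if_pos he]
    have e2 : ∑ e ∈ Mᶜ, (if e ∈ M then (-2 : ℤ) else 1) * ((if (G'.ends e).1 = v then (1:ℤ) else 0) +
          (if (G'.ends e).2 = v then 1 else 0)) = (G'.degIn Mᶜ v : ℤ) := by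
      rw [degIn_cast]
      apply Finset.sum_congr rfl
      intro e he
      rw [if_neg (Finset.mem_compl.mp he), one_mul]
    rw [e1, e2, hMdeg, hMcdeg]
    ring
  · intro e
    simp only []
    by_cases hm : e ∈ M <;> simp [hm]

theorem dvd_half (n : ℤ) (c : Prop) [Decidable c] (x y : ℤ)
    (h : n ∣ x - y) : n ∣ (if c then x else 0) - (if c then y else 0) := by
  split_ifs with hc
  · exact h
  · simp

theorem matching_deg (G : SignedMultigraph V E) (hcubic : ∀ v : V, G.degIn Finset.univ v = 3)
    (d : E → Bool × Bool) (φ : E → ℤ) (hks : ∀ v, G.vertexSum d φ v = 0)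
    (hb : ∀ e, 0 < |φ e| ∧ |φ e| < 3) (v : V) :
    G.degIn (Finset.univ.filter (fun e => φ e = 2 ∨ φ e = -2)) v = 1 := by
  classical
  set M : Finset E := Finset.univ.filter (fun e => φ e = 2 ∨ φ e = -2) with hMdef
  set Mc : Finset E := Finset.univ.filter (fun e => ¬ (φ e = 2 ∨ φ e = -2)) with hMcdef
  set T : E → ℤ := fun e =>
    ((if (G.ends e).1 = v then (if (d e).1 then φ e else -φ e) else 0) +
     (if (G.ends e).2 = v then (if (d e).2 then φ e else -φ e) else 0)) with hT
  have hφ : ∀ e, φ e = 1 ∨ φ e = -1 ∨ φ e = 2 ∨ φ e = -2 := by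
    intro e
    have h := hb e
    rcases abs_cases (φ e) with ⟨h1, _⟩ | ⟨h1, _⟩ <;> omega
  have hM1 : ∀ e ∈ M, φ e = 2 ∨ φ e = -2 := fun e he => (Finset.mem_filter.mp he).2
  have hMc1 : ∀ e ∈ Mc, φ e = 1 ∨ φ e = -1 := by
    intro e he
    have h2 := (Finset.mem_filter.mp he).2
    rcases hφ e with h | h | h | h <;> tauto
  have hdegsplit : G.degIn M v + G.degIn Mc v = 3 := by
    rw [← hcubic v]
    exact Finset.sum_filter_add_sum_filter_not _ _ _
  have hv := hks v
  have hv' : ∑ e ∈ M, T e + ∑ e ∈ Mc, T e = 0 := by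
    rw [Finset.sum_filter_add_sum_filter_not Finset.univ (fun e => φ e = 2 ∨ φ e = -2) T]
    exact hv
  -- parity of degIn Mc v
  have hdvdM : ∀ e ∈ M, (2:ℤ) ∣ T e := by
    intro e he
    have h := hM1 e he
    rw [hT]
    refine dvd_add ?_ ?_ <;> split_ifs <;> omega
  have hparity : (2:ℤ) ∣ (G.degIn Mc v : ℤ) := by
    have h1 : (2:ℤ) ∣ ∑ e ∈ M, T e := Finset.dvd_sum hdvdM
    have h2 : (2:ℤ) ∣ ∑ e ∈ Mc, T e := by
      have := hv'
      omega
    have h3 : (2:ℤ) ∣ (∑ e ∈ Mc, T e) - (G.degIn Mc v : ℤ) := by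
      rw [degIn_cast, ← Finset.sum_sub_distrib]
      apply Finset.dvd_sum
      intro e he
      have key : (∀ (b : Bool), (2:ℤ) ∣ (if b then φ e else -φ e) - 1) := by
        intro b
        rcases hMc1 e he with h | h <;> cases b <;> simp [h] <;> omega
      rw [hT]
      have expand : ((if (G.ends e).1 = v then (if (d e).1 then φ e else -φ e) else 0) +
          (if (G.ends e).2 = v then (if (d e).2 then φ e else -φ e) else 0)) -
          ((if (G.ends e).1 = v then (1:ℤ) else 0) + (if (G.ends e).2 = v then 1 else 0)) =
          ((if (G.ends e).1 = v then (if (d e).1 then φ e else -φ e) else 0) -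
            (if (G.ends e).1 = v then (1:ℤ) else 0)) +
          ((if (G.ends e).2 = v then (if (d e).2 then φ e else -φ e) else 0) -
            (if (G.ends e).2 = v then (1:ℤ) else 0)) := by ring
      rw [expand]
      exact dvd_add (dvd_half _ _ _ _ (key _)) (dvd_half _ _ _ _ (key _))
    omega
  -- degIn M v is odd, hence 1 or 3
  have hodd : G.degIn M v = 1 ∨ G.degIn M v = 3 := by omega
  rcases hodd with h | h
  · exact h
  · exfalso
    -- then degIn Mc v = 0, so T e = 0 on Mc
    have hMc0 : G.degIn Mc v = 0 := by omega
    have hTMc0 : ∀ e ∈ Mc, T e = 0 := by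
      intro e he
      have : ((if (G.ends e).1 = v then 1 else 0) + (if (G.ends e).2 = v then 1 else 0) : ℕ) = 0 := by
        have h0 : ∀ x ∈ Mc, ((if (G.ends x).1 = v then 1 else 0) + (if (G.ends x).2 = v then 1 else 0) : ℕ) = 0 :=
          (Finset.sum_eq_zero_iff).mp hMc0
        exact h0 e he
      have h1 : ¬ (G.ends e).1 = v := by
        intro hc; simp [hc] at this
      have h2 : ¬ (G.ends e).2 = v := by
        intro hc; simp [hc] at this
      rw [hT]
      simp [h1, h2]
    have hsumM : ∑ e ∈ M, T e = 0 := by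
      rw [Finset.sum_eq_zero hTMc0] at hv'
      omega
    -- mod 4 contradiction
    have h4 : (4:ℤ) ∣ (∑ e ∈ M, T e) - 2 * (G.degIn M v : ℤ) := by
      rw [degIn_cast, Finset.mul_sum, ← Finset.sum_sub_distrib]
      apply Finset.dvd_sum
      intro e he
      have key : (∀ (b : Bool), (4:ℤ) ∣ (if b then φ e else -φ e) - 2) := by
        intro b
        rcases hM1 e he with hh | hh <;> cases b <;> simp [hh] <;> omega
      have expand : ((if (G.ends e).1 = v then (if (d e).1 then φ e else -φ e) else 0) +
          (if (G.ends e).2 = v then (if (d e).2 then φ e else -φ e) else 0)) -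
          2 * ((if (G.ends e).1 = v then (1:ℤ) else 0) + (if (G.ends e).2 = v then 1 else 0)) =
          ((if (G.ends e).1 = v then (if (d e).1 then φ e else -φ e) else 0) -
            (if (G.ends e).1 = v then (2:ℤ) else 0)) +
          ((if (G.ends e).2 = v then (if (d e).2 then φ e else -φ e) else 0) -
            (if (G.ends e).2 = v then (2:ℤ) else 0)) := by
        split_ifs <;> ring
      rw [hT]
      rw [expand]
      exact dvd_add (dvd_half _ _ _ _ (key _)) (dvd_half _ _ _ _ (key _))
    rw [hsumM, h] at h4
    omega

theorem edge_sign (G : SignedMultigraph V E) (hcubic : ∀ v : V, G.degIn Finset.univ v = 3)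
    (d : E → Bool × Bool) (φ : E → ℤ) (hor : G.IsOrientation d)
    (hks : ∀ v, G.vertexSum d φ v = 0) (hb : ∀ e, 0 < |φ e| ∧ |φ e| < 3) :
    ∃ ζ : V → ℤ, (∀ v, ζ v = 1 ∨ ζ v = -1) ∧
      ∀ e, (G.neg e = true ↔ ζ (G.ends e).1 = ζ (G.ends e).2) := by
  classical
  set M : Finset E := Finset.univ.filter (fun e => φ e = 2 ∨ φ e = -2) with hMdef
  set Mc : Finset E := Finset.univ.filter (fun e => ¬ (φ e = 2 ∨ φ e = -2)) with hMcdef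
  set T : V → E → ℤ := fun v e =>
    ((if (G.ends e).1 = v then (if (d e).1 then φ e else -φ e) else 0) +
     (if (G.ends e).2 = v then (if (d e).2 then φ e else -φ e) else 0)) with hT
  set ind : V → E → ℤ := fun v e =>
    ((if (G.ends e).1 = v then (1:ℤ) else 0) + (if (G.ends e).2 = v then 1 else 0)) with hind
  have hφ : ∀ e, φ e = 1 ∨ φ e = -1 ∨ φ e = 2 ∨ φ e = -2 := by
    intro e
    have h := hb e
    rcases abs_cases (φ e) with ⟨h1, _⟩ | ⟨h1, _⟩ <;> omega
  have hM1 : ∀ e ∈ M, φ e = 2 ∨ φ e = -2 := fun e he => (Finset.mem_filter.mp he).2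
  have hMc1 : ∀ e ∈ Mc, φ e = 1 ∨ φ e = -1 := by
    intro e he
    have h2 := (Finset.mem_filter.mp he).2
    rcases hφ e with h | h | h | h <;> tauto
  have hdegM : ∀ v, G.degIn M v = 1 := matching_deg G hcubic d φ hks hb
  have hdegMc : ∀ v, G.degIn Mc v = 2 := by
    intro v
    have h1 := hcubic v
    have h2 : G.degIn M v + G.degIn Mc v = G.degIn Finset.univ v :=
      Finset.sum_filter_add_sum_filter_not _ _ _
    have h3 := hdegM v
    omega
  have hsumind_M : ∀ v, ∑ e ∈ M, ind v e = 1 := by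
    intro v
    rw [← degIn_cast, hdegM]
    norm_num
  have hsumind_Mc : ∀ v, ∑ e ∈ Mc, ind v e = 2 := by
    intro v
    rw [← degIn_cast, hdegMc]
    norm_num
  have hTub : ∀ v, ∀ e ∈ M, T v e ≤ 2 * ind v e ∧ -(2 * ind v e) ≤ T v e := by
    intro v e he
    have h := hM1 e he
    simp only [hT, hind]
    constructor <;> (split_ifs <;> omega)
  have hTub1 : ∀ v, ∀ e ∈ Mc, T v e ≤ ind v e ∧ -(ind v e) ≤ T v e := by
    intro v e he
    have h := hMc1 e he
    simp only [hT, hind]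
    constructor <;> (split_ifs <;> omega)
  set mval : V → ℤ := fun v => ∑ e ∈ M, T v e with hmval
  have hsumMc : ∀ v, ∑ e ∈ Mc, T v e = -mval v := by
    intro v
    have hv := hks v
    have hv' : ∑ e ∈ M, T v e + ∑ e ∈ Mc, T v e = 0 := by
      rw [Finset.sum_filter_add_sum_filter_not Finset.univ (fun e => φ e = 2 ∨ φ e = -2) (T v)]
      exact hv
    simp only [hmval]
    omega
  have hmval_pm : ∀ v, mval v = 2 ∨ mval v = -2 := by
    intro v
    have hub : mval v ≤ 2 := by
      have := Finset.sum_le_sum (fun e he => (hTub v e he).1)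
      rw [← Finset.mul_sum, hsumind_M v] at this
      simpa [hmval] using this
    have hlb : -2 ≤ mval v := by
      have := Finset.sum_le_sum (fun e he => (hTub v e he).2)
      rw [Finset.sum_neg_distrib, ← Finset.mul_sum, hsumind_M v] at this
      simp only [hmval]
      omega
    have hdvd : (4:ℤ) ∣ mval v - 2 := by
      have h4 : (4:ℤ) ∣ (∑ e ∈ M, T v e) - 2 * ∑ e ∈ M, ind v e := by
        rw [Finset.mul_sum, ← Finset.sum_sub_distrib]
        apply Finset.dvd_sum
        intro e he
        have key : (∀ (b : Bool), (4:ℤ) ∣ (if b then φ e else -φ e) - 2) := by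
          intro b
          rcases hM1 e he with hh | hh <;> cases b <;> simp [hh] <;> omega
        have expand : T v e - 2 * ind v e =
            ((if (G.ends e).1 = v then (if (d e).1 then φ e else -φ e) else 0) -
              (if (G.ends e).1 = v then (2:ℤ) else 0)) +
            ((if (G.ends e).2 = v then (if (d e).2 then φ e else -φ e) else 0) -
              (if (G.ends e).2 = v then (2:ℤ) else 0)) := by
          simp only [hT, hind]
          split_ifs <;> ring
        rw [expand]
        exact dvd_add (dvd_half _ _ _ _ (key _)) (dvd_half _ _ _ _ (key _))
      rw [hsumind_M v] at h4
      simpa [hmval] using h4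
    omega
  set ζ : V → ℤ := fun v => if mval v = 2 then 1 else -1 with hζdef
  have hζpm : ∀ v, ζ v = 1 ∨ ζ v = -1 := by
    intro v
    simp only [hζdef]
    split_ifs <;> tauto
  have hζmval : ∀ v, mval v = 2 * ζ v := by
    intro v
    rcases hmval_pm v with h | h <;> simp [hζdef, h]
  -- key pointwise identities
  have hA : ∀ v, ∀ e ∈ M, 2 * ind v e - ζ v * T v e = 0 := by
    intro v
    have hnn : ∀ e ∈ M, 0 ≤ 2 * ind v e - ζ v * T v e := by
      intro e he
      have h1 := (hTub v e he).1
      have h2 := (hTub v e he).2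
      rcases hζpm v with h | h <;> rw [h] <;> omega
    have hsum : ∑ e ∈ M, (2 * ind v e - ζ v * T v e) = 0 := by
      rw [Finset.sum_sub_distrib, ← Finset.mul_sum, ← Finset.mul_sum, hsumind_M v]
      have : ∑ e ∈ M, T v e = mval v := rfl
      rw [this, hζmval v]
      rcases hζpm v with h | h <;> rw [h] <;> ring
    intro e he
    exact (Finset.sum_eq_zero_iff_of_nonneg hnn).mp hsum e he
  have hB : ∀ v, ∀ e ∈ Mc, ind v e + ζ v * T v e = 0 := by
    intro v
    have hnn : ∀ e ∈ Mc, 0 ≤ ind v e + ζ v * T v e := by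
      intro e he
      have h1 := (hTub1 v e he).1
      have h2 := (hTub1 v e he).2
      rcases hζpm v with h | h <;> rw [h] <;> omega
    have hsum : ∑ e ∈ Mc, (ind v e + ζ v * T v e) = 0 := by
      rw [Finset.sum_add_distrib, ← Finset.mul_sum, hsumind_Mc v, hsumMc v, hζmval v]
      rcases hζpm v with h | h <;> rw [h] <;> ring
    intro e he
    exact (Finset.sum_eq_zero_iff_of_nonneg hnn).mp hsum e he
  refine ⟨ζ, hζpm, ?_⟩
  intro e
  set s1 : ℤ := if (d e).1 then φ e else -φ e with hs1
  set s2 : ℤ := if (d e).2 then φ e else -φ e with hs2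
  have hφne : φ e ≠ 0 := by
    have := hb e
    rcases abs_cases (φ e) with ⟨h1, _⟩ | ⟨h1, _⟩ <;> omega
  have hs_iff : ((d e).1 = (d e).2) ↔ s1 = s2 := by
    cases hb1 : (d e).1 <;> cases hb2 : (d e).2 <;> simp [hs1, hs2, hb1, hb2] <;> omega
  have main : s1 = s2 ↔ ζ (G.ends e).1 = ζ (G.ends e).2 := by
    by_cases hm : e ∈ M
    · have hspm1 : s1 = 2 ∨ s1 = -2 := by
        rcases hM1 e hm with h | h <;> cases hb1 : (d e).1 <;> simp [hs1, hb1, h]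
      have hspm2 : s2 = 2 ∨ s2 = -2 := by
        rcases hM1 e hm with h | h <;> cases hb2 : (d e).2 <;> simp [hs2, hb2, h]
      by_cases hl : (G.ends e).2 = (G.ends e).1
      · have hAu := hA (G.ends e).1 e hm
        have hTu : T (G.ends e).1 e = s1 + s2 := by
          simp only [hT]
          rw [if_pos hl]
          simp only [if_true, ite_true, eq_self_iff_true]
          rfl
        have hiu : ind (G.ends e).1 e = 2 := by
          simp only [hind]
          rw [if_pos hl]
          norm_num
        rw [hTu, hiu] at hAu
        rw [hl]
        refine ⟨fun _ => rfl, fun _ => ?_⟩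
        rcases hζpm (G.ends e).1 with h | h <;> rw [h] at hAu <;> omega
      · have hAu := hA (G.ends e).1 e hm
        have hAw := hA (G.ends e).2 e hm
        have hTu : T (G.ends e).1 e = s1 := by
          simp only [hT]
          rw [if_neg hl]
          simp only [if_true, ite_true, eq_self_iff_true, add_zero]
          rfl
        have hiu : ind (G.ends e).1 e = 1 := by
          simp only [hind]
          rw [if_neg hl]
          norm_num
        have hTw : T (G.ends e).2 e = s2 := by
          simp only [hT]
          rw [if_neg (fun hh => hl hh.symm)]
          simp only [if_true, ite_true, eq_self_iff_true, zero_add]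
          rfl
        have hiw : ind (G.ends e).2 e = 1 := by
          simp only [hind]
          rw [if_neg (fun hh => hl hh.symm)]
          norm_num
        rw [hTu, hiu] at hAu
        rw [hTw, hiw] at hAw
        have h1 : s1 = 2 * ζ (G.ends e).1 := by
          rcases hζpm (G.ends e).1 with h | h <;> rw [h] at hAu ⊢ <;> omega
        have h2 : s2 = 2 * ζ (G.ends e).2 := by
          rcases hζpm (G.ends e).2 with h | h <;> rw [h] at hAw ⊢ <;> omega
        rw [h1, h2]
        omega
    · have hmc : e ∈ Mc := by
        rw [hMcdef]
        refine Finset.mem_filter.mpr ⟨Finset.mem_univ e, ?_⟩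
        intro h
        exact hm (Finset.mem_filter.mpr ⟨Finset.mem_univ e, h⟩)
      have hφpm : φ e = 1 ∨ φ e = -1 := hMc1 e hmc
      have hspm1 : s1 = 1 ∨ s1 = -1 := by
        rcases hφpm with h | h <;> cases hb1 : (d e).1 <;> simp [hs1, hb1, h]
      have hspm2 : s2 = 1 ∨ s2 = -1 := by
        rcases hφpm with h | h <;> cases hb2 : (d e).2 <;> simp [hs2, hb2, h]
      by_cases hl : (G.ends e).2 = (G.ends e).1
      · have hBu := hB (G.ends e).1 e hmc
        have hTu : T (G.ends e).1 e = s1 + s2 := by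
          simp only [hT]
          rw [if_pos hl]
          simp only [if_true, ite_true, eq_self_iff_true]
          rfl
        have hiu : ind (G.ends e).1 e = 2 := by
          simp only [hind]
          rw [if_pos hl]
          norm_num
        rw [hTu, hiu] at hBu
        rw [hl]
        refine ⟨fun _ => rfl, fun _ => ?_⟩
        rcases hζpm (G.ends e).1 with h | h <;> rw [h] at hBu <;> omega
      · have hBu := hB (G.ends e).1 e hmc
        have hBw := hB (G.ends e).2 e hmc
        have hTu : T (G.ends e).1 e = s1 := by
          simp only [hT]
          rw [if_neg hl]
          simp only [if_true, ite_true, eq_self_iff_true, add_zero]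
          rfl
        have hiu : ind (G.ends e).1 e = 1 := by
          simp only [hind]
          rw [if_neg hl]
          norm_num
        have hTw : T (G.ends e).2 e = s2 := by
          simp only [hT]
          rw [if_neg (fun hh => hl hh.symm)]
          simp only [if_true, ite_true, eq_self_iff_true, zero_add]
          rfl
        have hiw : ind (G.ends e).2 e = 1 := by
          simp only [hind]
          rw [if_neg (fun hh => hl hh.symm)]
          norm_num
        rw [hTu, hiu] at hBu
        rw [hTw, hiw] at hBw
        have h1 : s1 = -(ζ (G.ends e).1) := by
          rcases hζpm (G.ends e).1 with h | h <;> rw [h] at hBu ⊢ <;> omega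
        have h2 : s2 = -(ζ (G.ends e).2) := by
          rcases hζpm (G.ends e).2 with h | h <;> rw [h] at hBw ⊢ <;> omega
        rw [h1, h2]
        omega
  exact (hor e).trans (hs_iff.trans main)

theorem forward_dir (G : SignedMultigraph V E) (hcubic : ∀ v : V, G.degIn Finset.univ v = 3)
    (h : G.HasNZkFlow 3) :
    G.Antibalanced ∧ ∃ M : Finset E, ∀ v : V, G.degIn M v = 1 := by
  obtain ⟨d, φ, ⟨hor, hks⟩, hb⟩ := h
  refine ⟨?_, ⟨Finset.univ.filter (fun e => φ e = 2 ∨ φ e = -2),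
    matching_deg G hcubic d φ hks hb⟩⟩
  obtain ⟨ζ, hζpm, hζ⟩ := edge_sign G hcubic d φ hor hks hb
  classical
  refine ⟨G.switchSet (Finset.univ.filter fun v => ζ v = -1), equiv_switchSet G _, ?_⟩
  intro e
  show xor (G.neg e) (xor (decide ((G.ends e).1 ∈ Finset.univ.filter fun v => ζ v = -1))
      (decide ((G.ends e).2 ∈ Finset.univ.filter fun v => ζ v = -1))) = true
  have hmem : ∀ a : V, (decide (a ∈ Finset.univ.filter fun v => ζ v = -1)) =
      (decide (ζ a = -1)) := by
    intro a
    by_cases h : ζ a = -1 <;> simp [h]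
  rw [hmem, hmem]
  by_cases h12 : ζ (G.ends e).1 = ζ (G.ends e).2
  · have hneg : G.neg e = true := (hζ e).mpr h12
    rw [hneg, h12]
    cases decide (ζ (G.ends e).2 = -1) <;> rfl
  · have hneg : G.neg e = false := by
      cases h : G.neg e
      · rfl
      · exact absurd ((hζ e).mp h) h12
    rw [hneg]
    rcases hζpm (G.ends e).1 with h1 | h1 <;> rcases hζpm (G.ends e).2 with h2 | h2
    · exact absurd (h1.trans h2.symm) h12
    · rw [h1, h2]; decide
    · rw [h1, h2]; decide
    · exact absurd (h1.trans h2.symm) h12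


end Aux
end SignedMultigraph

open SignedMultigraph in
/-- A signed cubic graph has a nowhere-zero 3-flow iff it is antibalanced and the
underlying graph has a perfect matching. -/
theorem stmt_11 {V E : Type} [Fintype V] [Fintype E] [DecidableEq V] [DecidableEq E]
    (G : SignedMultigraph V E) (hcubic : ∀ v : V, G.degIn Finset.univ v = 3) :
    G.HasNZkFlow 3 ↔
      G.Antibalanced ∧ ∃ M : Finset E, ∀ v : V, G.degIn M v = 1 := by
  constructor
  · exact forward_dir G hcubic
  · rintro ⟨hab, M, hM⟩
    exact backward_dir G hcubic hab M hM
end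

section
/- Every r-regular graph with r ≥ 3 odd that has a perfect matching admits a zero-sum 3-flow (an assignment of values in {±1, ±2} to edges with zero sum of values of incident edges at every vertex). -/
open Finset

set_option linter.unusedSectionVars false
set_option maxHeartbeats 1000000

namespace ZSAux

open SignedMultigraph

variable {V E : Type} [Fintype V] [Fintype E] [DecidableEq V] [DecidableEq E]
  (G : SignedMultigraph V E)

/-- tail of an oriented edge -/
def tl (d : E → Bool) (e : E) : V := if d e then (G.ends e).1 else (G.ends e).2
/-- head of an oriented edge -/
def hd (d : E → Bool) (e : E) : V := if d e then (G.ends e).2 else (G.ends e).1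

/-- degree, as an integer -/
def degZ (F : Finset E) (v : V) : ℤ :=
  ∑ e ∈ F, ((if (G.ends e).1 = v then 1 else 0) + (if (G.ends e).2 = v then 1 else 0))

def outZ (F : Finset E) (d : E → Bool) (v : V) : ℤ :=
  ∑ e ∈ F, (if tl G d e = v then 1 else 0)

def inZ (F : Finset E) (d : E → Bool) (v : V) : ℤ :=
  ∑ e ∈ F, (if hd G d e = v then 1 else 0)

def wsum (F : Finset E) (g : E → ℤ) (v : V) : ℤ :=
  ∑ e ∈ F, ((if (G.ends e).1 = v then g e else 0) + (if (G.ends e).2 = v then g e else 0))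

lemma edge_split (d : E → Bool) (e : E) (v : V) :
    (if tl G d e = v then (1:ℤ) else 0) + (if hd G d e = v then 1 else 0) =
      (if (G.ends e).1 = v then 1 else 0) + (if (G.ends e).2 = v then 1 else 0) := by
  unfold tl hd; cases d e <;> simp <;> ring

lemma degZ_eq (F : Finset E) (d : E → Bool) (v : V) :
    degZ G F v = outZ G F d v + inZ G F d v := by
  unfold degZ outZ inZ
  rw [← Finset.sum_add_distrib]
  exact Finset.sum_congr rfl fun e _ => (edge_split G d e v).symm

lemma outZ_update (F : Finset E) (d : E → Bool) (e : E) (b : Bool) (he : e ∉ F) (v : V) :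
    outZ G F (Function.update d e b) v = outZ G F d v := by
  unfold outZ
  refine Finset.sum_congr rfl fun e' he' => ?_
  have : e' ≠ e := fun h => he (h ▸ he')
  unfold tl
  rw [Function.update_of_ne this]

lemma inZ_update (F : Finset E) (d : E → Bool) (e : E) (b : Bool) (he : e ∉ F) (v : V) :
    inZ G F (Function.update d e b) v = inZ G F d v := by
  unfold inZ
  refine Finset.sum_congr rfl fun e' he' => ?_
  have : e' ≠ e := fun h => he (h ▸ he')
  unfold hd
  rw [Function.update_of_ne this]

lemma outZ_erase_add (F : Finset E) (d : E → Bool) (e : E) (he : e ∈ F) (v : V) :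
    outZ G (F.erase e) d v + (if tl G d e = v then 1 else 0) = outZ G F d v :=
  Finset.sum_erase_add F _ he

lemma inZ_erase_add (F : Finset E) (d : E → Bool) (e : E) (he : e ∈ F) (v : V) :
    inZ G (F.erase e) d v + (if hd G d e = v then 1 else 0) = inZ G F d v :=
  Finset.sum_erase_add F _ he

lemma degZ_erase_add (F : Finset E) (e : E) (he : e ∈ F) (v : V) :
    degZ G (F.erase e) v +
      ((if (G.ends e).1 = v then 1 else 0) + (if (G.ends e).2 = v then 1 else 0)) = degZ G F v :=
  Finset.sum_erase_add F _ he

/-- Key orientation lemma: an "even" edge set has a balanced orientation, and an edge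
set with exactly two odd vertices `a ≠ b` has an orientation with excess `+1` at `a`
and `-1` at `b`. -/


theorem orient (n : ℕ) : ∀ F : Finset E, F.card = n →
    ((∀ v, Even (degZ G F v)) → ∃ d, ∀ v, outZ G F d v = inZ G F d v) ∧
    (∀ a b : V, a ≠ b → (∀ v : V, ¬ Even (degZ G F v) ↔ v = a ∨ v = b) →
      ∃ d, ∀ v, outZ G F d v - inZ G F d v =
        (if v = a then 1 else 0) - (if v = b then 1 else 0)) := by
  induction n using Nat.strong_induction_on with
  | _ n IH =>
  intro F hcard
  have hsplit : ∀ (e : E), e ∈ F → ∀ (d : E → Bool) (b : Bool) (v : V),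
      outZ G F (Function.update d e b) v - inZ G F (Function.update d e b) v =
        (outZ G (F.erase e) d v - inZ G (F.erase e) d v) +
        ((if (if b then (G.ends e).1 else (G.ends e).2) = v then 1 else 0) -
         (if (if b then (G.ends e).2 else (G.ends e).1) = v then 1 else 0)) := by
    intro e he d b v
    rw [← outZ_erase_add G F _ e he v, ← inZ_erase_add G F _ e he v,
      outZ_update G _ d e b (Finset.notMem_erase e F) v,
      inZ_update G _ d e b (Finset.notMem_erase e F) v]
    have h1 : tl G (Function.update d e b) e = (if b then (G.ends e).1 else (G.ends e).2) := by
      unfold tl; rw [Function.update_self]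
    have h2 : hd G (Function.update d e b) e = (if b then (G.ends e).2 else (G.ends e).1) := by
      unfold hd; rw [Function.update_self]
    rw [h1, h2]; ring
  constructor
  · -- balanced orientation of an even edge set
    intro hev
    rcases F.eq_empty_or_nonempty with rfl | ⟨e, he⟩
    · exact ⟨fun _ => true, fun v => rfl⟩
    have hn : 1 ≤ n := by rw [← hcard]; exact Finset.card_pos.mpr ⟨e, he⟩
    have hcard' : (F.erase e).card = n - 1 := by
      rw [Finset.card_erase_of_mem he, hcard]
    have IH' := IH (n-1) (by omega) (F.erase e) hcard'
    have hdeg : ∀ v, degZ G (F.erase e) v = degZ G F v -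
        ((if (G.ends e).1 = v then 1 else 0) + (if (G.ends e).2 = v then 1 else 0)) := by
      intro v; have := degZ_erase_add G F e he v; linarith
    by_cases hab : (G.ends e).1 = (G.ends e).2
    · -- loop
      obtain ⟨d, hbal⟩ := IH'.1 (by
        intro v
        rw [hdeg v]
        refine (hev v).sub ?_
        by_cases h1 : (G.ends e).1 = v
        · rw [if_pos h1, if_pos (hab.symm.trans h1)]; exact ⟨1, by ring⟩
        · rw [if_neg h1, if_neg (fun h => h1 (hab.trans h))]; exact ⟨0, by ring⟩)
      refine ⟨Function.update d e true, fun v => ?_⟩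
      have h := hsplit e he d true v
      simp only [if_true] at h
      rw [hab] at h
      simp only [sub_self, add_zero] at h
      have hb := hbal v
      omega
    · -- non-loop
      obtain ⟨d, hbal⟩ := IH'.2 (G.ends e).1 (G.ends e).2 hab (by
        intro v
        have h0 := hev v
        rw [Int.even_iff] at h0
        rw [hdeg v, Int.not_even_iff]
        by_cases h1 : (G.ends e).1 = v <;> by_cases h2 : (G.ends e).2 = v
        · exact absurd (h1.trans h2.symm) hab
        · simp only [if_pos h1, if_neg h2]
          constructor
          · intro _; exact Or.inl h1.symm
          · intro _; omega
        · simp only [if_neg h1, if_pos h2]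
          constructor
          · intro _; exact Or.inr h2.symm
          · intro _; omega
        · simp only [if_neg h1, if_neg h2]
          constructor
          · intro h; omega
          · rintro (rfl | rfl)
            · exact absurd rfl h1
            · exact absurd rfl h2)
      refine ⟨Function.update d e false, fun v => ?_⟩
      have h := hsplit e he d false v
      simp only [Bool.false_eq_true, if_false] at h
      rw [hbal v] at h
      have : outZ G F (Function.update d e false) v = inZ G F (Function.update d e false) v := by
        by_cases h1 : v = (G.ends e).1 <;> by_cases h2 : v = (G.ends e).2
        · exact absurd (h1.symm.trans h2) hab
        · rw [if_pos h1, if_neg h2, if_neg (fun hh => h2 hh.symm), if_pos h1.symm] at h; omega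
        · rw [if_neg h1, if_pos h2, if_pos h2.symm, if_neg (fun hh => h1 hh.symm)] at h; omega
        · rw [if_neg h1, if_neg h2, if_neg (fun hh => h2 hh.symm),
            if_neg (fun hh => h1 hh.symm)] at h; omega
      omega
  · -- orientation with excess +1 at a, -1 at b
    intro a b hab hodd
    have ha : ¬ Even (degZ G F a) := (hodd a).mpr (Or.inl rfl)
    have hex : ∃ e ∈ F, (G.ends e).1 = a ∨ (G.ends e).2 = a := by
      by_contra hc
      push_neg at hc
      apply ha
      have h0 : degZ G F a = 0 := by
        refine Finset.sum_eq_zero fun e heF => ?_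
        obtain ⟨hne1, hne2⟩ := hc e heF
        rw [if_neg hne1, if_neg hne2]; ring
      rw [h0]; exact Even.zero
    obtain ⟨e, he, hinc⟩ := hex
    have hn : 1 ≤ n := by rw [← hcard]; exact Finset.card_pos.mpr ⟨e, he⟩
    have hcard' : (F.erase e).card = n - 1 := by
      rw [Finset.card_erase_of_mem he, hcard]
    have IH' := IH (n-1) (by omega) (F.erase e) hcard'
    have hdeg : ∀ v, degZ G (F.erase e) v = degZ G F v -
        ((if (G.ends e).1 = v then 1 else 0) + (if (G.ends e).2 = v then 1 else 0)) := by
      intro v; have := degZ_erase_add G F e he v; linarith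
    by_cases hloop : (G.ends e).1 = (G.ends e).2
    · -- loop: parities unchanged, recurse with same (a, b)
      obtain ⟨d, hbal⟩ := IH'.2 a b hab (by
        intro v
        have h0 := hodd v
        rw [Int.not_even_iff] at h0 ⊢
        rw [hdeg v]
        by_cases h1 : (G.ends e).1 = v
        · rw [if_pos h1, if_pos (hloop.symm.trans h1)]
          rw [← h0]; omega
        · rw [if_neg h1, if_neg (fun h => h1 (hloop.trans h))]
          rw [← h0]; omega)
      refine ⟨Function.update d e true, fun v => ?_⟩
      have h := hsplit e he d true v
      simp only [if_true] at h
      rw [hloop] at h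
      simp only [sub_self, add_zero] at h
      rw [h, hbal v]
    · -- non-loop
      rcases hinc with h1 | h2
      · -- tail endpoint is `ends.1 = a`; orient e with d e = true
        have hca : (G.ends e).2 ≠ a := fun h => hloop (h1.trans h.symm)
        by_cases hcb : (G.ends e).2 = b
        · -- other endpoint is b: the rest is even
          obtain ⟨d, hbal⟩ := IH'.1 (by
            intro v
            have h0 := hodd v
            rw [Int.not_even_iff] at h0
            rw [hdeg v, Int.even_iff]
            by_cases hv1 : (G.ends e).1 = v <;> by_cases hv2 : (G.ends e).2 = v
            · exact absurd (hv1.trans hv2.symm) hloop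
            · have : degZ G F v % 2 = 1 := h0.mpr (Or.inl (hv1.symm.trans h1))
              rw [if_pos hv1, if_neg hv2]; omega
            · have : degZ G F v % 2 = 1 := h0.mpr (Or.inr (hv2.symm.trans hcb))
              rw [if_neg hv1, if_pos hv2]; omega
            · have hne : degZ G F v % 2 ≠ 1 := by
                intro hh
                rcases h0.mp hh with rfl | rfl
                · exact hv1 h1
                · exact hv2 hcb
              rw [if_neg hv1, if_neg hv2]; omega)
          refine ⟨Function.update d e true, fun v => ?_⟩
          have h := hsplit e he d true v
          simp only [if_true] at h
          rw [h1, hcb] at h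
          have hb := hbal v
          by_cases hva : v = a <;> by_cases hvb : v = b
          · exact absurd (hva.symm.trans hvb) hab
          · rw [if_pos hva.symm, if_neg (fun hh => hvb hh.symm)] at h
            rw [if_pos hva, if_neg hvb]
            omega
          · rw [if_neg (fun hh => hva hh.symm), if_pos hvb.symm] at h
            rw [if_neg hva, if_pos hvb]
            omega
          · rw [if_neg (fun hh => hva hh.symm), if_neg (fun hh => hvb hh.symm)] at h
            rw [if_neg hva, if_neg hvb]
            omega
        · -- other endpoint c ∉ {a, b}: recurse with (c, b)
          obtain ⟨d, hbal⟩ := IH'.2 (G.ends e).2 b hcb (by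
            intro v
            have h0 := hodd v
            rw [Int.not_even_iff] at h0 ⊢
            rw [hdeg v]
            by_cases hv1 : (G.ends e).1 = v <;> by_cases hv2 : (G.ends e).2 = v
            · exact absurd (hv1.trans hv2.symm) hloop
            · -- v = a : now even; RHS must be false
              have hd1 : degZ G F v % 2 = 1 := h0.mpr (Or.inl (hv1.symm.trans h1))
              rw [if_pos hv1, if_neg hv2]
              constructor
              · intro hh; omega
              · intro hh
                rcases hh with hh | hh
                · exact absurd hh.symm hv2
                · exact absurd ((h1.symm.trans hv1).trans hh) hab
            · -- v = c : now odd
              have hd0 : degZ G F v % 2 = 0 := by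
                have hne : ¬ (v = a ∨ v = b) := by
                  rintro (rfl | rfl)
                  · exact hv1 h1
                  · exact hcb hv2
                have h1' : degZ G F v % 2 ≠ 1 := fun hh => hne (h0.mp hh)
                omega
              rw [if_neg hv1, if_pos hv2]
              constructor
              · intro _; exact Or.inl hv2.symm
              · intro _; omega
            · -- v ∉ {a, c} : unchanged
              rw [if_neg hv1, if_neg hv2]
              constructor
              · intro hh
                have hd1 : degZ G F v % 2 = 1 := by omega
                rcases h0.mp hd1 with hh' | hh'
                · exact absurd (h1.trans hh'.symm) hv1
                · exact Or.inr hh'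
              · intro hh
                rcases hh with hh | hh
                · exact absurd hh.symm hv2
                · have hd1 : degZ G F v % 2 = 1 := h0.mpr (Or.inr hh)
                  omega)
          refine ⟨Function.update d e true, fun v => ?_⟩
          have h := hsplit e he d true v
          simp only [if_true] at h
          rw [h1] at h
          have hb := hbal v
          by_cases hva : v = a <;> by_cases hvb : v = b <;>
            by_cases hvc : v = (G.ends e).2
          all_goals (
            first
            | exact absurd (hva.symm.trans hvb) hab
            | (try rw [if_pos hva.symm] at h
               try rw [if_neg (fun hh => hva hh.symm)] at h
               try rw [if_pos hvc.symm] at h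
               try rw [if_neg (fun hh => hvc hh.symm)] at h
               try rw [if_pos hvc] at hb
               try rw [if_neg hvc] at hb
               try rw [if_pos hvb] at hb
               try rw [if_neg hvb] at hb
               try rw [if_pos hva]
               try rw [if_neg hva]
               try rw [if_pos hvb]
               try rw [if_neg hvb]
               omega))
      · -- tail endpoint is `ends.2 = a`; orient e with d e = false
        have hca : (G.ends e).1 ≠ a := fun h => hloop (h.trans h2.symm)
        by_cases hcb : (G.ends e).1 = b
        · -- other endpoint is b: the rest is even
          obtain ⟨d, hbal⟩ := IH'.1 (by
            intro v
            have h0 := hodd v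
            rw [Int.not_even_iff] at h0
            rw [hdeg v, Int.even_iff]
            by_cases hv1 : (G.ends e).1 = v <;> by_cases hv2 : (G.ends e).2 = v
            · exact absurd (hv1.trans hv2.symm) hloop
            · have : degZ G F v % 2 = 1 := h0.mpr (Or.inr (hv1.symm.trans hcb))
              rw [if_pos hv1, if_neg hv2]; omega
            · have : degZ G F v % 2 = 1 := h0.mpr (Or.inl (hv2.symm.trans h2))
              rw [if_neg hv1, if_pos hv2]; omega
            · have hne : degZ G F v % 2 ≠ 1 := by
                intro hh
                rcases h0.mp hh with rfl | rfl
                · exact hv2 h2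
                · exact hv1 hcb
              rw [if_neg hv1, if_neg hv2]; omega)
          refine ⟨Function.update d e false, fun v => ?_⟩
          have h := hsplit e he d false v
          simp only [Bool.false_eq_true, if_false] at h
          rw [h2, hcb] at h
          have hb := hbal v
          by_cases hva : v = a <;> by_cases hvb : v = b
          · exact absurd (hva.symm.trans hvb) hab
          · rw [if_pos hva.symm, if_neg (fun hh => hvb hh.symm)] at h
            rw [if_pos hva, if_neg hvb]
            omega
          · rw [if_neg (fun hh => hva hh.symm), if_pos hvb.symm] at h
            rw [if_neg hva, if_pos hvb]
            omega
          · rw [if_neg (fun hh => hva hh.symm), if_neg (fun hh => hvb hh.symm)] at h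
            rw [if_neg hva, if_neg hvb]
            omega
        · -- other endpoint c ∉ {a, b}: recurse with (c, b)
          obtain ⟨d, hbal⟩ := IH'.2 (G.ends e).1 b hcb (by
            intro v
            have h0 := hodd v
            rw [Int.not_even_iff] at h0 ⊢
            rw [hdeg v]
            by_cases hv1 : (G.ends e).1 = v <;> by_cases hv2 : (G.ends e).2 = v
            · exact absurd (hv1.trans hv2.symm) hloop
            · -- v = c : now odd
              have hd0 : degZ G F v % 2 = 0 := by
                have hne : ¬ (v = a ∨ v = b) := by
                  rintro (rfl | rfl)
                  · exact hv2 h2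
                  · exact hcb hv1
                have h1' : degZ G F v % 2 ≠ 1 := fun hh => hne (h0.mp hh)
                omega
              rw [if_pos hv1, if_neg hv2]
              constructor
              · intro _; exact Or.inl hv1.symm
              · intro _; omega
            · -- v = a : now even; RHS must be false
              have hd1 : degZ G F v % 2 = 1 := h0.mpr (Or.inl (hv2.symm.trans h2))
              rw [if_neg hv1, if_pos hv2]
              constructor
              · intro hh; omega
              · intro hh
                rcases hh with hh | hh
                · exact absurd hh.symm hv1
                · exact absurd ((h2.symm.trans hv2).trans hh) hab
            · -- v ∉ {a, c} : unchanged
              rw [if_neg hv1, if_neg hv2]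
              constructor
              · intro hh
                have hd1 : degZ G F v % 2 = 1 := by omega
                rcases h0.mp hd1 with hh' | hh'
                · exact absurd (h2.trans hh'.symm) hv2
                · exact Or.inr hh'
              · intro hh
                rcases hh with hh | hh
                · exact absurd hh.symm hv1
                · have hd1 : degZ G F v % 2 = 1 := h0.mpr (Or.inr hh)
                  omega)
          refine ⟨Function.update d e false, fun v => ?_⟩
          have h := hsplit e he d false v
          simp only [Bool.false_eq_true, if_false] at h
          rw [h2] at h
          have hb := hbal v
          by_cases hva : v = a <;> by_cases hvb : v = b <;>
            by_cases hvc : v = (G.ends e).1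
          all_goals (
            first
            | exact absurd (hva.symm.trans hvb) hab
            | (try rw [if_pos hva.symm] at h
               try rw [if_neg (fun hh => hva hh.symm)] at h
               try rw [if_pos hvc.symm] at h
               try rw [if_neg (fun hh => hvc hh.symm)] at h
               try rw [if_pos hvc] at hb
               try rw [if_neg hvc] at hb
               try rw [if_pos hvb] at hb
               try rw [if_neg hvb] at hb
               try rw [if_pos hva]
               try rw [if_neg hva]
               try rw [if_pos hvb]
               try rw [if_neg hvb]
               omega))


lemma outZ_card (F : Finset E) (d : E → Bool) (v : V) :
    outZ G F d v = ((F.filter (fun e => tl G d e = v)).card : ℤ) := by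
  unfold outZ
  rw [Finset.card_filter]
  push_cast
  rfl

lemma inZ_card (F : Finset E) (d : E → Bool) (v : V) :
    inZ G F d v = ((F.filter (fun e => hd G d e = v)).card : ℤ) := by
  unfold inZ
  rw [Finset.card_filter]
  push_cast
  rfl

/-- Petersen-style 2-factor extraction. -/
lemma twofactor (F : Finset E) (k : ℕ) (hk : 1 ≤ k)
    (hdeg : ∀ v, degZ G F v = 2 * k) :
    ∃ T ⊆ F, ∀ v, degZ G T v = 2 := by
  obtain ⟨d, hbal⟩ := (orient G F.card F rfl).1 (fun v => ⟨k, by rw [hdeg]; ring⟩)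
  have hout : ∀ v, (F.filter (fun e => tl G d e = v)).card = k := by
    intro v
    have h1 := degZ_eq G F d v
    have h2 := hbal v
    rw [hdeg v, outZ_card, inZ_card] at h1
    rw [outZ_card, inZ_card] at h2
    omega
  have hin : ∀ v, (F.filter (fun e => hd G d e = v)).card = k := by
    intro v
    have h1 := degZ_eq G F d v
    have h2 := hbal v
    rw [hdeg v, outZ_card, inZ_card] at h1
    rw [outZ_card, inZ_card] at h2
    omega
  set t : V → Finset V := fun v => (F.filter (fun e => tl G d e = v)).image (hd G d) with ht
  have hall : ∀ A : Finset V, A.card ≤ (A.biUnion t).card := by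
    intro A
    have hfib : ∀ (B : Finset V) (f : E → V), ((F.filter (fun e => f e ∈ B)).card)
        = ∑ w ∈ B, ((F.filter (fun e => f e = w)).card) := by
      intro B f
      rw [Finset.card_eq_sum_card_fiberwise
        (f := f) (s := F.filter (fun e => f e ∈ B)) (t := B) (fun e heB => (Finset.mem_filter.mp heB).2)]
      refine Finset.sum_congr rfl fun w hw => ?_
      congr 1
      ext e
      simp only [Finset.mem_filter]
      constructor
      · rintro ⟨⟨heF, _⟩, hfe⟩; exact ⟨heF, hfe⟩
      · rintro ⟨heF, hfe⟩; exact ⟨⟨heF, hfe ▸ hw⟩, hfe⟩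
    have h1 : (F.filter (fun e => tl G d e ∈ A)).card = A.card * k := by
      rw [hfib A (tl G d)]
      rw [Finset.sum_congr rfl (fun v _ => hout v), Finset.sum_const, smul_eq_mul]
    have h2 : (F.filter (fun e => hd G d e ∈ A.biUnion t)).card = (A.biUnion t).card * k := by
      rw [hfib (A.biUnion t) (hd G d)]
      rw [Finset.sum_congr rfl (fun v _ => hin v), Finset.sum_const, smul_eq_mul]
    have hsub : (F.filter (fun e => tl G d e ∈ A)) ⊆ (F.filter (fun e => hd G d e ∈ A.biUnion t)) := by
      intro e heA
      obtain ⟨heF, htlA⟩ := Finset.mem_filter.mp heA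
      refine Finset.mem_filter.mpr ⟨heF, Finset.mem_biUnion.mpr ⟨tl G d e, htlA, ?_⟩⟩
      exact Finset.mem_image.mpr ⟨e, Finset.mem_filter.mpr ⟨heF, rfl⟩, rfl⟩
    have := Finset.card_le_card hsub
    rw [h1, h2] at this
    exact Nat.le_of_mul_le_mul_right this hk
  obtain ⟨ι, hιinj, hιmem⟩ := (Finset.all_card_le_biUnion_card_iff_exists_injective t).mp hall
  have hchoice : ∀ v, ∃ e, e ∈ F ∧ tl G d e = v ∧ hd G d e = ι v := by
    intro v
    obtain ⟨e, he', heq⟩ := Finset.mem_image.mp (hιmem v)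
    exact ⟨e, (Finset.mem_filter.mp he').1, (Finset.mem_filter.mp he').2, heq⟩
  choose ε hεF hεtl hεhd using hchoice
  refine ⟨Finset.univ.image ε, ?_, ?_⟩
  · intro e heT
    obtain ⟨u, _, rfl⟩ := Finset.mem_image.mp heT
    exact hεF u
  · intro v
    unfold degZ
    rw [Finset.sum_image (fun u hu u' hu' h => by rw [← hεtl u, ← hεtl u', h])]
    have hre : ∀ u : V, ((if (G.ends (ε u)).1 = v then (1:ℤ) else 0) +
        (if (G.ends (ε u)).2 = v then 1 else 0)) =
        ((if u = v then (1:ℤ) else 0) + (if ι u = v then 1 else 0)) := by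
      intro u
      rw [← edge_split G d (ε u) v, hεtl u, hεhd u]
    rw [Finset.sum_congr rfl (fun u _ => hre u), Finset.sum_add_distrib]
    have hbij : Function.Bijective ι := Finite.injective_iff_bijective.mp hιinj
    have e1 : (∑ u : V, if u = v then (1:ℤ) else 0) = 1 := by
      rw [Finset.sum_ite_eq' Finset.univ v (fun _ => (1:ℤ))]
      simp
    have e2 : (∑ u : V, if ι u = v then (1:ℤ) else 0) = 1 := by
      rw [Fintype.sum_bijective ι hbij _ (fun w => if w = v then (1:ℤ) else 0) (fun u => rfl)]
      rw [Finset.sum_ite_eq' Finset.univ v (fun _ => (1:ℤ))]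
      simp
    rw [e1, e2]
    norm_num

lemma wsum_const (F : Finset E) (g : E → ℤ) (c : ℤ) (h : ∀ e ∈ F, g e = c) (v : V) :
    wsum G F g v = c * degZ G F v := by
  unfold wsum degZ
  rw [Finset.mul_sum]
  refine Finset.sum_congr rfl fun e he => ?_
  rw [h e he]
  by_cases h1 : (G.ends e).1 = v <;> by_cases h2 : (G.ends e).2 = v <;>
    simp [h1, h2] <;> ring

lemma wsum_congr (F : Finset E) (g g' : E → ℤ) (h : ∀ e ∈ F, g e = g' e) (v : V) :
    wsum G F g v = wsum G F g' v := by
  unfold wsum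
  exact Finset.sum_congr rfl fun e he => by rw [h e he]

lemma wsum_sdiff (F T : Finset E) (hT : T ⊆ F) (g : E → ℤ) (v : V) :
    wsum G (F \ T) g v + wsum G T g v = wsum G F g v :=
  Finset.sum_sdiff hT

lemma wsum_neg (F : Finset E) (g : E → ℤ) (v : V) :
    wsum G F (fun e => -(g e)) v = - wsum G F g v := by
  unfold wsum
  rw [← Finset.sum_neg_distrib]
  refine Finset.sum_congr rfl fun e he => ?_
  by_cases h1 : (G.ends e).1 = v <;> by_cases h2 : (G.ends e).2 = v <;>
    simp [h1, h2]

lemma degZ_sdiff (F T : Finset E) (hT : T ⊆ F) (v : V) :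
    degZ G (F \ T) v + degZ G T v = degZ G F v :=
  Finset.sum_sdiff hT

/-- Labeling of a `2k`-regular edge set by `±1` with all weighted vertex sums equal
(`2` if `k` is odd, `0` if `k` is even). -/
lemma labeling : ∀ (k : ℕ), 1 ≤ k → ∀ F : Finset E, (∀ v, degZ G F v = 2 * k) →
    ∃ g : E → ℤ, (∀ e ∈ F, g e = 1 ∨ g e = -1) ∧
      ∀ v, wsum G F g v = if Odd k then 2 else 0 := by
  intro k hk
  induction k, hk using Nat.le_induction with
  | base =>
    intro F hdeg
    refine ⟨fun _ => 1, fun e _ => Or.inl rfl, fun v => ?_⟩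
    have : wsum G F (fun _ => 1) v = 1 * degZ G F v := wsum_const G F _ 1 (fun _ _ => rfl) v
    rw [this, hdeg v]
    norm_num
  | succ k hk1 IH =>
    intro F hdeg
    obtain ⟨T, hTF, hTdeg⟩ := twofactor G F (k+1) (by omega) (by exact_mod_cast hdeg)
    have hdeg' : ∀ v, degZ G (F \ T) v = 2 * k := by
      intro v
      have := degZ_sdiff G F T hTF v
      have h1 := hdeg v
      have h2 := hTdeg v
      push_cast at h1 ⊢
      omega
    obtain ⟨g', hg'val, hg'sum⟩ := IH (F \ T) hdeg'
    set c : ℤ := if Odd (k+1) then 1 else -1 with hc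
    refine ⟨fun e => if e ∈ T then c else g' e, ?_, ?_⟩
    · intro e heF
      by_cases heT : e ∈ T
      · simp only [if_pos heT, hc]
        split_ifs
        · exact Or.inl rfl
        · exact Or.inr rfl
      · simp only [if_neg heT]
        exact hg'val e (Finset.mem_sdiff.mpr ⟨heF, heT⟩)
    · intro v
      rw [← wsum_sdiff G F T hTF]
      have e1 : wsum G T (fun e => if e ∈ T then c else g' e) v = c * 2 := by
        rw [wsum_const G T _ c (fun e he => if_pos he) v, hTdeg v]
      have e2 : wsum G (F \ T) (fun e => if e ∈ T then c else g' e) v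
          = if Odd k then 2 else 0 := by
        rw [wsum_congr G (F \ T) _ g'
          (fun e he => if_neg (Finset.mem_sdiff.mp he).2) v]
        exact hg'sum v
      rw [e1, e2, hc]
      have h2 : Odd (1 + k) ↔ ¬ Odd k := by rw [Nat.add_comm, Nat.odd_add_one]
      rcases Nat.even_or_odd k with hke | hko
      · have hnk := Nat.not_odd_iff_even.mpr hke
        rw [if_pos (Nat.odd_add_one.mpr hnk), if_neg hnk]
        have h3 : Odd (1 + k) := h2.mpr hnk
        have h4 : Odd (k + 1) := Nat.odd_add_one.mpr hnk
        simp [h3, h4]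
      · rw [if_neg (fun hh => (Nat.odd_add_one.mp hh) hko), if_pos hko]
        have h3 : ¬ Odd (1 + k) := fun hh => (h2.mp hh) hko
        have h4 : ¬ Odd (k + 1) := fun hh => (Nat.odd_add_one.mp hh) hko
        simp [h3, h4]

/-- Labeling of a `2k`-regular edge set (`k ≥ 1`) by values in `{±1, ±2}` with all
weighted vertex sums equal to `2`. -/
lemma labeling2 (k : ℕ) (hk : 1 ≤ k) (F : Finset E) (hdeg : ∀ v, degZ G F v = 2 * k) :
    ∃ g : E → ℤ, (∀ e ∈ F, 1 ≤ |g e| ∧ |g e| ≤ 2) ∧ ∀ v, wsum G F g v = 2 := by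
  rcases Nat.even_or_odd k with hke | hko
  · -- k even, so k ≥ 2: peel one 2-factor, give it value 2, negate the rest
    have hk2 : 2 ≤ k := by
      rcases hke with ⟨m, rfl⟩; omega
    obtain ⟨T, hTF, hTdeg⟩ := twofactor G F k hk hdeg
    have hc1 : ((k-1:ℕ):ℤ) = (k:ℤ) - 1 := by
      rw [Nat.cast_sub hk]; norm_num
    have hdeg' : ∀ v, degZ G (F \ T) v = 2 * ((k-1:ℕ):ℤ) := by
      intro v
      have h0 := degZ_sdiff G F T hTF v
      have h1 := hdeg v
      have h2 := hTdeg v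
      rw [hc1]
      omega
    obtain ⟨g', hval', hsum'⟩ := labeling G (k-1) (by omega) (F \ T) hdeg'
    have hodd : Odd (k-1) := by
      rcases hke with ⟨m, rfl⟩
      exact ⟨m - 1, by omega⟩
    refine ⟨fun e => if e ∈ T then 2 else -(g' e), fun e heF => ?_, fun v => ?_⟩
    · by_cases heT : e ∈ T
      · simp [heT]
      · simp only [if_neg heT]
        rcases hval' e (Finset.mem_sdiff.mpr ⟨heF, heT⟩) with h | h <;> rw [h] <;> norm_num
    · rw [← wsum_sdiff G F T hTF]
      have e1 : wsum G T (fun e => if e ∈ T then 2 else -(g' e)) v = 2 * 2 := by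
        rw [wsum_const G T _ 2 (fun e he => if_pos he) v, hTdeg v]
      have e2 : wsum G (F \ T) (fun e => if e ∈ T then 2 else -(g' e)) v = -2 := by
        rw [wsum_congr G (F \ T) _ (fun e => -(g' e))
          (fun e he => if_neg (Finset.mem_sdiff.mp he).2) v,
          wsum_neg G (F \ T) g' v, hsum' v, if_pos hodd]
      rw [e1, e2]
      ring
  · obtain ⟨g, hval, hsum⟩ := labeling G k hk F hdeg
    refine ⟨g, fun e he => ?_, fun v => ?_⟩
    · rcases hval e he with h | h <;> rw [h] <;> norm_num
    · rw [hsum v, if_pos hko]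


lemma degZ_cast (F : Finset E) (v : V) : degZ G F v = (G.degIn F v : ℤ) := by
  unfold degZ SignedMultigraph.degIn
  push_cast
  rfl

end ZSAux

open SignedMultigraph in
/-- Every odd `r`-regular graph (`r ≥ 3`) with a perfect matching has a zero-sum 3-flow. -/
theorem stmt_17 {V E : Type} [Fintype V] [Fintype E] [DecidableEq V] [DecidableEq E]
    (G : SignedMultigraph V E) (r : ℕ) (hr3 : 3 ≤ r) (hodd : Odd r)
    (hreg : ∀ v : V, G.degIn Finset.univ v = r)
    (hpm : ∃ M : Finset E, ∀ v : V, G.degIn M v = 1) :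
    G.ZeroSumFlow 3 := by
  obtain ⟨M, hM⟩ := hpm
  obtain ⟨k, hk⟩ := hodd
  have hk1 : 1 ≤ k := by omega
  have hMsub : M ⊆ Finset.univ := Finset.subset_univ M
  have hdegH : ∀ v, ZSAux.degZ G (Finset.univ \ M) v = 2 * (k:ℤ) := by
    intro v
    have h0 := ZSAux.degZ_sdiff G Finset.univ M hMsub v
    have h1 : ZSAux.degZ G Finset.univ v = (r:ℤ) := by rw [ZSAux.degZ_cast, hreg v]
    have h2 : ZSAux.degZ G M v = 1 := by rw [ZSAux.degZ_cast, hM v]; norm_num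
    have h3 : (r:ℤ) = 2 * k + 1 := by exact_mod_cast congrArg (Nat.cast (R := ℤ)) hk
    omega
  obtain ⟨g, hgval, hgsum⟩ := ZSAux.labeling2 G k hk1 (Finset.univ \ M) hdegH
  refine ⟨fun e => if e ∈ M then -2 else g e, fun e => ?_, fun v => ?_⟩
  · by_cases heM : e ∈ M
    · simp only [if_pos heM]
      norm_num
    · simp only [if_neg heM]
      have := hgval e (Finset.mem_sdiff.mpr ⟨Finset.mem_univ e, heM⟩)
      exact ⟨this.1, by linarith [this.2]⟩
  · have hsum : (∑ e, ((if (G.ends e).1 = v then (if e ∈ M then -2 else g e) else 0) +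
        (if (G.ends e).2 = v then (if e ∈ M then -2 else g e) else 0)))
        = ZSAux.wsum G Finset.univ (fun e => if e ∈ M then -2 else g e) v := rfl
    rw [hsum, ← ZSAux.wsum_sdiff G Finset.univ M hMsub]
    have e1 : ZSAux.wsum G M (fun e => if e ∈ M then -2 else g e) v = -2 := by
      rw [ZSAux.wsum_const G M _ (-2) (fun e he => if_pos he) v, ZSAux.degZ_cast, hM v]
      norm_num
    have e2 : ZSAux.wsum G (Finset.univ \ M) (fun e => if e ∈ M then -2 else g e) v = 2 := by
      rw [ZSAux.wsum_congr G (Finset.univ \ M) _ g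
        (fun e he => if_neg (Finset.mem_sdiff.mp he).2) v]
      exact hgsum v
    rw [e1, e2]
    ring
end
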